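/- Let H be a real Hilbert space, A ⊆ H a nonempty bounded symmetric set (A = −A), f : H → ℝ convex and Fréchet differentiable, δ ∈ (0,1], ρ > 0, C > 0 and μ̃ > 0. Assume: (i) curvature bound: f(x + γρ s) ≤ f(x) + γ⟪∇f(x), ρ s⟫ + (γ²/2)·C for all x ∈ ρ·conv(A), s ∈ A and all γ ∈ ℝ; (ii) x⋆ ∈ ρ·conv(A) satisfies f(x⋆) ≤ f(w) for all w ∈ ρ·conv(A); (iii) (x_t)_{t≥0} satisfies x_t ∈ ρ·conv(A) for every t, z_t ∈ A is a δ-approximate matching-pursuit LMO output at x_t (⟪∇f(x_t), z_t⟫ ≤ δ·inf_{z∈A} ⟪∇f(x_t), z⟫), and x_{t+1} = x_t + (ρ²·⟪−∇f(x_t), z_t⟫/C)·z_t; (iv) strong-convexity-type bound: for every t with ⟪∇f(x_t), x⋆ − x_t⟫ < 0, it holds that f(x⋆) ≥ f(x_t) + ⟪∇f(x_t), x⋆ − x_t⟫ + (γ_t²/2)·μ̃, where γ_t := ⟪−∇f(x_t), x⋆ − x_t⟫ / S_t and S_t := sup_{s∈A} ⟪−∇f(x_t), ρ s⟫. Then for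 every t ≥ 0, the suboptimality ε_t := f(x_t) − f(x⋆) satisfies ε_{t+1} ≤ (1 − δ²·μ̃/C)·ε_t. -/

import Mathlib

open scoped RealInnerProductSpace Pointwise
open Filter Topology


lemma convex_grad_le {H : Type*} [NormedAddCommGroup H] [InnerProductSpace ℝ H] [CompleteSpace H]
    {f : H → ℝ} {g x y : H} (hconv : ConvexOn ℝ Set.univ f) (hg : HasGradientAt f g x) :
    f x + ⟪g, y - x⟫ ≤ f y := by
  set φ : ℝ → ℝ := fun t => f (x + t • (y - x)) with hφdef
  have hline : HasDerivAt (fun t : ℝ => x + t • (y - x)) (y - x) 0 := by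
    simpa using ((hasDerivAt_id (0:ℝ)).smul_const (y - x)).const_add x
  have hφ : HasDerivAt φ ⟪g, y - x⟫ 0 := by
    have h0 : (x + (0:ℝ) • (y - x)) = x := by simp
    have hg' : HasFDerivAt f ((InnerProductSpace.toDual ℝ H) g) (x + (0:ℝ) • (y - x)) := by
      rw [h0]; exact hg.hasFDerivAt
    exact (hg'.comp_hasDerivAt 0 hline).congr_deriv (by simp)
  have hslope : Tendsto (slope φ 0) (𝓝[>] 0) (𝓝 ⟪g, y - x⟫) :=
    (hasDerivAt_iff_tendsto_slope.mp hφ).mono_left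
      (nhdsWithin_mono 0 (fun t ht => ne_of_gt ht))
  have hbound : ∀ᶠ t in 𝓝[>] (0:ℝ), slope φ 0 t ≤ f y - f x := by
    filter_upwards [Ioo_mem_nhdsGT_of_mem (Set.left_mem_Ico.mpr one_pos)] with t ht
    have h1 : φ t ≤ (1 - t) * f x + t * f y := by
      have := hconv.2 (Set.mem_univ x) (Set.mem_univ y)
        (by linarith [ht.2] : (0:ℝ) ≤ 1 - t) (le_of_lt ht.1) (by ring)
      have hpt : (1 - t) • x + t • y = x + t • (y - x) := by module
      simpa [hφdef, hpt] using this
    have hφ0 : φ 0 = f x := by simp [hφdef]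
    have heq : slope φ 0 t = (φ t - f x) / t := by
      rw [slope_def_field, hφ0, sub_zero]
    rw [heq, div_le_iff₀ ht.1]
    nlinarith [ht.1]
  have := le_of_tendsto hslope hbound
  linarith [this]

set_option maxHeartbeats 1600000 in
/-- Linear convergence of the Affine Invariant Generalized Matching Pursuit algorithm under an
affine invariant curvature bound `C` and strong-convexity-type lower bound `μ̃`
(Theorem 8 / `thm:LinearMPAffineInvariant`). -/
theorem affineInvariantMatchingPursuit_linear_convergence
    {H : Type*} [NormedAddCommGroup H] [InnerProductSpace ℝ H] [CompleteSpace H]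
    (A : Set H) (hA : A.Nonempty) (hAbdd : Bornology.IsBounded A)
    (hsym : A = -A)
    (f : H → ℝ) (f' : H → H)
    (hconv : ConvexOn ℝ Set.univ f)
    (hdiff : ∀ w : H, HasGradientAt f (f' w) w)
    (δ : ℝ) (hδ : δ ∈ Set.Ioc (0:ℝ) 1)
    (ρ : ℝ) (hρ : 0 < ρ)
    (C : ℝ) (hC : 0 < C)
    (μt : ℝ) (hμt : 0 < μt)
    (hcurv : ∀ x ∈ ρ • convexHull ℝ A, ∀ s ∈ A, ∀ γ : ℝ,
        f (x + γ • (ρ • s)) ≤ f x + γ * ⟪f' x, ρ • s⟫ + γ ^ 2 / 2 * C)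
    (xstar : H) (hxstar : xstar ∈ ρ • convexHull ℝ A)
    (hmin : ∀ w ∈ ρ • convexHull ℝ A, f xstar ≤ f w)
    (x z : ℕ → H)
    (hxmem : ∀ t, x t ∈ ρ • convexHull ℝ A)
    (hzA : ∀ t, z t ∈ A)
    (hlmo : ∀ t, ⟪f' (x t), z t⟫ ≤ δ * sInf ((fun w => ⟪f' (x t), w⟫) '' A))
    (hupd : ∀ t, x (t + 1) = x t + (ρ ^ 2 * ⟪-f' (x t), z t⟫ / C) • z t)
    (hstrong : ∀ t, ⟪f' (x t), xstar - x t⟫ < 0 →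
        f (x t) + ⟪f' (x t), xstar - x t⟫ +
          (⟪-f' (x t), xstar - x t⟫ / sSup ((fun s => ⟪-f' (x t), ρ • s⟫) '' A)) ^ 2 / 2 * μt
        ≤ f xstar) :
    ∀ t : ℕ, f (x (t + 1)) - f xstar ≤ (1 - δ ^ 2 * μt / C) * (f (x t) - f xstar) := by
  obtain ⟨hδ0, hδ1⟩ := hδ
  obtain ⟨M, hM⟩ := hAbdd.exists_norm_le
  have hnegmem : ∀ a ∈ A, -a ∈ A := by
    intro a ha; rw [hsym]; exact Set.neg_mem_neg.mpr ha
  have hbdd : ∀ v : H, BddAbove ((fun s => ⟪v, s⟫) '' A) := by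
    intro v
    refine ⟨‖v‖ * M, ?_⟩
    rintro r ⟨a, ha, rfl⟩
    exact (real_inner_le_norm v a).trans
      (mul_le_mul_of_nonneg_left (hM a ha) (norm_nonneg v))
  intro t
  set g := f' (x t) with hgdef
  set c : ℝ := sSup ((fun s => ⟪-g, s⟫) '' A) with hcdef
  have hle_c : ∀ a ∈ A, ⟪-g, a⟫ ≤ c := fun a ha => le_csSup (hbdd (-g)) ⟨a, ha, rfl⟩
  have hc0 : 0 ≤ c := by
    obtain ⟨a, ha⟩ := hA
    have h1 := hle_c a ha
    have h2 := hle_c (-a) (hnegmem a ha)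
    rw [inner_neg_right] at h2
    linarith
  -- images under ⟪v,·⟫ and ⟪-v,·⟫ coincide
  have himgswap : ∀ v : H, (fun s : H => ⟪v, s⟫) '' A = (fun s : H => ⟪-v, s⟫) '' A := by
    intro v
    ext r
    constructor <;> rintro ⟨a, ha, rfl⟩
    · exact ⟨-a, hnegmem a ha, by simp⟩
    · exact ⟨-a, hnegmem a ha, by simp⟩
  have hneg_img : (fun w : H => ⟪g, w⟫) '' A = -((fun s : H => ⟪-g, s⟫) '' A) := by
    ext r
    rw [Set.mem_neg]
    constructor
    · rintro ⟨a, ha, rfl⟩; exact ⟨a, ha, by simp⟩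
    · rintro ⟨a, ha, hr⟩
      refine ⟨a, ha, ?_⟩
      have hr' : -⟪g, a⟫ = -r := by
        have : ⟪-g, a⟫ = -r := hr
        rwa [inner_neg_left] at this
      simpa using hr'
  have hsInf : sInf ((fun w : H => ⟪g, w⟫) '' A) = -c := by
    rw [hneg_img, Real.sInf_def, neg_neg]
  have hS : sSup ((fun s : H => ⟪-g, ρ • s⟫) '' A) = ρ * c := by
    have himg : (fun s : H => ⟪-g, ρ • s⟫) '' A = ρ • ((fun s : H => ⟪-g, s⟫) '' A) := by
      rw [← Set.image_smul, Set.image_image]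
      apply Set.image_congr
      intro s _
      simp [real_inner_smul_right]
    rw [himg, Real.sSup_smul_of_nonneg hρ.le, smul_eq_mul]
  -- halfspace bound on ρ • convexHull A
  have hhalf : ∀ v : H, ∀ w ∈ ρ • convexHull ℝ A,
      ⟪v, w⟫ ≤ ρ * sSup ((fun s : H => ⟪v, s⟫) '' A) := by
    intro v w hw
    obtain ⟨u, hu, rfl⟩ := hw
    have hsub : convexHull ℝ A ⊆ {w : H | ⟪v, w⟫ ≤ sSup ((fun s : H => ⟪v, s⟫) '' A)} := by
      apply convexHull_min
      · intro a ha; exact le_csSup (hbdd v) ⟨a, ha, rfl⟩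
      · exact convex_halfSpace_le
          ⟨fun a b => inner_add_right v a b, fun r a => real_inner_smul_right v a r⟩ _
    have := hsub hu
    rw [real_inner_smul_right]
    exact mul_le_mul_of_nonneg_left this hρ.le
  have hxs1 : ⟪-g, xstar⟫ ≤ ρ * c := by
    simpa [hcdef] using hhalf (-g) xstar hxstar
  have hxs2 : ⟪g, x t⟫ ≤ ρ * c := by
    have := hhalf g (x t) (hxmem t)
    rwa [himgswap g, ← hcdef] at this
  have hp2 : ⟪-g, xstar - x t⟫ ≤ 2 * (ρ * c) := by
    have e : ⟪-g, xstar - x t⟫ = ⟪-g, xstar⟫ + ⟪g, x t⟫ := by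
      simp [inner_sub_right, inner_neg_left]
    rw [e]; linarith
  -- lmo bound
  set d : ℝ := ⟪-g, z t⟫ with hddef
  have hd : δ * c ≤ d := by
    have := hlmo t
    rw [← hgdef, hsInf] at this
    have hd' : d = -⟪g, z t⟫ := by rw [hddef, inner_neg_left]
    rw [hd']
    nlinarith
  have hd0 : 0 ≤ d := le_trans (by positivity) hd
  -- descent step
  have hx1 : x (t + 1) = x t + (ρ * d / C) • (ρ • z t) := by
    rw [hupd t, smul_smul, ← hgdef, ← hddef]
    congr 1
    · congr 1; ring
  have key : f (x (t + 1)) ≤ f (x t) - ρ ^ 2 * d ^ 2 / (2 * C) := by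
    have h := hcurv (x t) (hxmem t) (z t) (hzA t) (ρ * d / C)
    rw [← hx1, ← hgdef] at h
    have hip : ⟪g, ρ • z t⟫ = -(ρ * d) := by
      rw [real_inner_smul_right]
      have : ⟪g, z t⟫ = -d := by rw [hddef, inner_neg_left]; ring
      rw [this]; ring
    rw [hip] at h
    have hCne : C ≠ 0 := ne_of_gt hC
    calc f (x (t+1)) ≤ f (x t) + ρ * d / C * -(ρ * d) + (ρ * d / C) ^ 2 / 2 * C := h
      _ = f (x t) - ρ ^ 2 * d ^ 2 / (2 * C) := by field_simp; ring
  have hεt0 : 0 ≤ f (x t) - f xstar := sub_nonneg.mpr (hmin _ (hxmem t))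
  have hstr : ⟪g, xstar - x t⟫ < 0 →
      f (x t) + ⟪g, xstar - x t⟫ + (⟪-g, xstar - x t⟫ / (ρ * c)) ^ 2 / 2 * μt ≤ f xstar := by
    intro hh
    have := hstrong t hh
    rwa [← hgdef, hS] at this
  have hcg : f (x t) + ⟪g, xstar - x t⟫ ≤ f xstar := by
    have := convex_grad_le hconv (hdiff (x t)) (y := xstar)
    rwa [← hgdef] at this
  set p : ℝ := ⟪-g, xstar - x t⟫ with hpdef
  have hp' : ⟪g, xstar - x t⟫ = -p := by rw [hpdef, inner_neg_left]; ring
  rw [hp'] at hstr hcg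
  clear_value g c d p
  clear hstrong hdiff hconv hcurv hlmo hupd hmin hxmem hzA hbdd himgswap hneg_img
    hsInf hS hxs1 hxs2 hx1 hle_c hM hnegmem hA hAbdd hsym hxstar hgdef hcdef hddef hpdef
  by_cases h : -p < 0
  · -- strong convexity case
    have hp0 : 0 < p := by linarith
    have hρc : 0 < ρ * c := by nlinarith
    have hst := hstr h
    -- εt ≤ (ρc)²/(2μt)
    have hεbound : f (x t) - f xstar ≤ (ρ * c) ^ 2 / (2 * μt) := by
      have hq : f (x t) - f xstar ≤ p - (p / (ρ * c)) ^ 2 / 2 * μt := by linarith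
      have hqq : p - (p / (ρ * c)) ^ 2 / 2 * μt ≤ (ρ * c) ^ 2 / (2 * μt) := by
        have hdiffeq : p - (p / (ρ * c)) ^ 2 / 2 * μt - (ρ * c) ^ 2 / (2 * μt)
            = -(((ρ * c) ^ 2 - p * μt) ^ 2 / (2 * μt * (ρ * c) ^ 2)) := by
          have hcne : c ≠ 0 := by rintro rfl; simp at hρc
          have hρne : ρ ≠ 0 := hρ.ne'
          field_simp
          ring
        have hnn : 0 ≤ ((ρ * c) ^ 2 - p * μt) ^ 2 / (2 * μt * (ρ * c) ^ 2) := by positivity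
        linarith
      linarith
    have hdsq : δ ^ 2 * c ^ 2 ≤ d ^ 2 := by
      nlinarith [mul_le_mul hd hd (by positivity : (0:ℝ) ≤ δ * c) hd0]
    set E : ℝ := f (x t) - f xstar with hEdef
    have h3 : 2 * μt * E ≤ (ρ * c) ^ 2 := by
      rw [le_div_iff₀ (by positivity : (0:ℝ) < 2 * μt)] at hεbound
      linarith
    have ha : δ ^ 2 * c ^ 2 * ρ ^ 2 ≤ d ^ 2 * ρ ^ 2 :=
      mul_le_mul_of_nonneg_right hdsq (sq_nonneg ρ)
    have hb : δ ^ 2 * (2 * μt * E) ≤ δ ^ 2 * (ρ * c) ^ 2 :=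
      mul_le_mul_of_nonneg_left h3 (sq_nonneg δ)
    have hmain : 2 * (δ ^ 2 * μt * E) ≤ ρ ^ 2 * d ^ 2 := by nlinarith [ha, hb]
    have h5 : δ ^ 2 * μt / C * E ≤ ρ ^ 2 * d ^ 2 / (2 * C) := by
      rw [div_mul_eq_mul_div, div_le_div_iff₀ (by positivity) (by positivity : (0:ℝ) < 2 * C)]
      nlinarith [mul_le_mul_of_nonneg_right hmain hC.le]
    have hring : (1 - δ ^ 2 * μt / C) * E = E - δ ^ 2 * μt / C * E := by ring
    rw [hring]
    linarith [key, h5]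
  · -- optimality case: εt = 0
    push_neg at h
    have hεt : f (x t) - f xstar = 0 := le_antisymm (by linarith) hεt0
    have hzero : (1 - δ ^ 2 * μt / C) * (f (x t) - f xstar) = 0 := by
      rw [hεt, mul_zero]
    rw [hzero]
    have hnn : 0 ≤ ρ ^ 2 * d ^ 2 / (2 * C) := by positivity
    linarith [key]
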